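/- Let f : ℝ → ℝ be twice differentiable on (0,∞) and suppose the function u ↦ f''(u) + f'(u)/u is not identically zero on (0,∞) (i.e. the surface of revolution r(u,v) = (u sinh v, u cosh v, f(u)) is not semi-isotropic minimal). If there exist λ₁, λ₂, λ₃ ∈ ℝ with Δrᵢ = λᵢ rᵢ for i = 1,2,3 at all points (u,v) with u > 0, then λ₁ = λ₂ = 0, λ₃ ≠ 0, and f satisfies the Bessel-type equation f''(u) + f'(u)/u + λ₃ f(u) = 0 for all u > 0; consequently there exist c₁, c₂ ∈ ℝ such that f(u) = c₁ J₀(√λ₃ u) + c₂ Y₀(√λ₃ u) if λ₃ > 0, and f(u) = c₁ I₀(√(−λ₃) u) + c₂ K₀(√(−λ₃) u) if λ₃ < 0. -/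

import Mathlib

/-- The Bessel function of the first kind of order zero,
`J₀(x) = ∑ (−1)ⁿ x²ⁿ / (2²ⁿ (n!)²)`. -/
noncomputable def besselJ0 (x : ℝ) : ℝ :=
  ∑' n : ℕ, (-1 : ℝ) ^ n * x ^ (2 * n) / (2 ^ (2 * n) * ((n.factorial : ℝ)) ^ 2)

/-- `φ(n) = ∑_{m=1}^n 1/m`, with `φ(0) = 0`. -/
noncomputable def harmonicPhi (n : ℕ) : ℝ :=
  ∑ m ∈ Finset.range n, (1 : ℝ) / (m + 1)

/-- Weber's Bessel function of order zero,
`Y₀(x) = (2/π)[(ln(x/2) + γ) J₀(x) − ∑ (−1)ⁿ φ(n) x²ⁿ / (2²ⁿ (n!)²)]`. -/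
noncomputable def besselY0 (x : ℝ) : ℝ :=
  (2 / Real.pi) *
    ((Real.log (x / 2) + Real.eulerMascheroniConstant) * besselJ0 x -
      ∑' n : ℕ, (-1 : ℝ) ^ n * harmonicPhi n * x ^ (2 * n) /
        (2 ^ (2 * n) * ((n.factorial : ℝ)) ^ 2))

/-- The modified Bessel function of the first kind of order zero,
`I₀(x) = ∑ x²ⁿ / (2²ⁿ (n!)²)`. -/
noncomputable def besselI0 (x : ℝ) : ℝ :=
  ∑' n : ℕ, x ^ (2 * n) / (2 ^ (2 * n) * ((n.factorial : ℝ)) ^ 2)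

/-- The modified Bessel function of the second kind of order zero,
`K₀(x) = −(ln(x/2) + γ) I₀(x) + ∑ φ(n) x²ⁿ / (2²ⁿ (n!)²)`. -/
noncomputable def besselK0 (x : ℝ) : ℝ :=
  -(Real.log (x / 2) + Real.eulerMascheroniConstant) * besselI0 x +
    ∑' n : ℕ, harmonicPhi n * x ^ (2 * n) / (2 ^ (2 * n) * ((n.factorial : ℝ)) ^ 2)

/-- The Laplace operator of the first fundamental form of the surface of revolution
`r(u,v) = (u sinh v, u cosh v, f(u))` in the semi-isotropic space (`E = −1`, `F = 0`,
`G = u²`, `W = −u²`), following the general formula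
`Δψ = −(1/√|W|)[∂_u((Gψ_u − Fψ_v)/√|W|) − ∂_v((Fψ_u − Eψ_v)/√|W|)]`. -/
noncomputable def lapI (ψ : ℝ → ℝ → ℝ) (u v : ℝ) : ℝ :=
  -(1 / Real.sqrt |(-1 : ℝ) * u ^ 2 - 0 ^ 2|) *
    (deriv (fun t =>
        (t ^ 2 * deriv (fun s => ψ s v) t - 0 * deriv (fun s => ψ t s) v) /
          Real.sqrt |(-1 : ℝ) * t ^ 2 - 0 ^ 2|) u
      - deriv (fun w =>
        (0 * deriv (fun s => ψ s w) u - (-1 : ℝ) * deriv (fun s => ψ u s) w) /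
          Real.sqrt |(-1 : ℝ) * u ^ 2 - 0 ^ 2|) v)

section Aux

open Filter Topology Set

lemma nat_quart_le : ∀ n : ℕ, (n+1)^4 ≤ 6 * 4^n := by
  intro n
  induction n with
  | zero => norm_num
  | succ m ih =>
    rcases Nat.lt_or_ge m 2 with h | h
    · interval_cases m <;> norm_num
    · have h3 : 3*(m+2) ≤ 4*(m+1) := by omega
      have h4 := Nat.pow_le_pow_left h3 4
      have e1 : (3*(m+2))^4 = 81 * (m+2)^4 := by ring
      have e2 : (4*(m+1))^4 = 256 * (m+1)^4 := by ring
      rw [e1, e2] at h4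
      have e3 : (m+1+1) = (m+2) := rfl
      rw [e3]
      have e4 : 6 * 4^(m+1) = 4 * (6 * 4^m) := by ring
      rw [e4]
      omega

lemma summable_factorial_aux (C M : ℝ) {c : ℕ → ℝ}
    (h : ∀ n, |c n| ≤ C * M ^ n / n.factorial) : Summable c := by
  apply Summable.of_norm_bounded (((Real.summable_pow_div_factorial M).mul_left C))
  intro n
  simpa [mul_div_assoc] using h n

lemma summable_main {c : ℕ → ℝ} {e : ℕ → ℕ} (A : ℝ)
    (hc : ∀ n, |c n| ≤ A * ((n:ℝ)+1)^4 / (4 ^ n * (n.factorial:ℝ)^2))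
    (he : ∀ n, e n ≤ 2 * n + 2) (R : ℝ) (hR : 0 ≤ R) :
    Summable (fun n => |c n| * R ^ (e n)) := by
  set M : ℝ := (max R 1) ^ 2 with hM
  have hM1 : (1:ℝ) ≤ max R 1 := le_max_right _ _
  have hMn0 : ∀ n : ℕ, (0:ℝ) ≤ M ^ n := fun n => by positivity
  apply summable_factorial_aux (6 * |A| * M) M
  intro n
  have hfac : (1:ℝ) ≤ (n.factorial : ℝ) := by
    exact_mod_cast Nat.one_le_iff_ne_zero.mpr n.factorial_ne_zero
  have hRpow : R ^ (e n) ≤ M * M ^ n := by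
    calc R ^ (e n) ≤ (max R 1) ^ (e n) := pow_le_pow_left₀ hR (le_max_left _ _) _
      _ ≤ (max R 1) ^ (2 * n + 2) := pow_le_pow_right₀ hM1 (he n)
      _ = M * M ^ n := by rw [hM, ← pow_mul]; ring
  have hq : ((n:ℝ)+1)^4 ≤ 6 * 4 ^ n := by
    have h0 := nat_quart_le n
    have h1 : (((n+1)^4 : ℕ) : ℝ) ≤ ((6 * 4^n : ℕ) : ℝ) := by exact_mod_cast h0
    push_cast at h1
    linarith
  have h1 : |c n| * R ^ e n ≤ (A * ((n:ℝ)+1)^4 / (4 ^ n * (n.factorial:ℝ)^2)) * (M * M ^ n) :=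
    mul_le_mul (hc n) hRpow (by positivity) (le_trans (abs_nonneg _) (hc n))
  have h2 : A * ((n:ℝ)+1)^4 ≤ |A| * (6 * 4 ^ n) := by
    calc A * ((n:ℝ)+1)^4 ≤ |A| * ((n:ℝ)+1)^4 := by
          nlinarith [le_abs_self A, pow_nonneg (by positivity : (0:ℝ) ≤ (n:ℝ)+1) 4]
      _ ≤ |A| * (6 * 4^n) := by nlinarith [abs_nonneg A]
  have hM0 : (0:ℝ) ≤ M := by positivity
  have key : (A * ((n:ℝ)+1)^4 / (4 ^ n * (n.factorial:ℝ)^2)) * (M * M ^ n)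
      ≤ 6 * |A| * M * M ^ n / (n.factorial:ℝ) := by
    rw [div_mul_eq_mul_div, div_le_div_iff₀ (by positivity) (by positivity)]
    have h3 : A*((n:ℝ)+1)^4 * M^n ≤ |A| * (6*4^n) * M^n :=
      mul_le_mul_of_nonneg_right h2 (hMn0 n)
    have h5 : (n.factorial:ℝ) ≤ (n.factorial:ℝ)^2 := by nlinarith
    calc A * ((n:ℝ)+1)^4 * (M * M^n) * (n.factorial:ℝ)
        = (A * ((n:ℝ)+1)^4 * M^n * (n.factorial:ℝ)) * M := by ring
      _ ≤ (|A| * (6*4^n) * M^n * (n.factorial:ℝ)) * M := by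
          apply mul_le_mul_of_nonneg_right _ hM0
          exact mul_le_mul_of_nonneg_right h3 (by positivity)
      _ ≤ (|A| * (6*4^n) * M^n * (n.factorial:ℝ)^2) * M := by
          have hpos : (0:ℝ) ≤ |A| * (6*4^n) * M^n := by positivity
          nlinarith [mul_le_mul_of_nonneg_left h5 hpos, hM0]
      _ = 6 * |A| * M * M ^ n * (4 ^ n * (n.factorial:ℝ)^2) := by ring
  rw [abs_of_nonneg (by positivity : (0:ℝ) ≤ |c n| * R ^ e n)]
  exact h1.trans key

/-- Pointwise summability from the master bound. -/
lemma summable_pt {c : ℕ → ℝ} {e : ℕ → ℕ} (A : ℝ)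
    (hc : ∀ n, |c n| ≤ A * ((n:ℝ)+1)^4 / (4 ^ n * (n.factorial:ℝ)^2))
    (he : ∀ n, e n ≤ 2 * n + 2) (x : ℝ) :
    Summable (fun n => c n * x ^ (e n)) := by
  apply Summable.of_norm_bounded (summable_main A hc he |x| (abs_nonneg x))
  intro n
  rw [Real.norm_eq_abs, abs_mul, abs_pow]

/-- Termwise differentiation of an entire power-type series. -/
lemma hasDerivAt_tsum_pow {b : ℕ → ℝ} {k : ℕ → ℕ} (A : ℝ)
    (hb : ∀ n, |b n| ≤ A * ((n:ℝ)+1)^4 / (4 ^ n * (n.factorial:ℝ)^2))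
    (hb' : ∀ n, |b n * (k n : ℝ)| ≤ (2*A) * ((n:ℝ)+1)^4 / (4 ^ n * (n.factorial:ℝ)^2))
    (hk : ∀ n, k n ≤ 2 * n) (x : ℝ) :
    HasDerivAt (fun y => ∑' n, b n * y ^ k n) (∑' n, b n * (k n : ℝ) * x ^ (k n - 1)) x := by
  set R : ℝ := |x| + 1 with hR
  have hR0 : (0:ℝ) ≤ R := by positivity
  have hxR : x ∈ Metric.ball (0:ℝ) R := by
    simp only [Metric.mem_ball, Real.dist_eq, sub_zero]
    linarith [abs_nonneg x]
  have hk2 : ∀ n, k n ≤ 2 * n + 2 := fun n => le_trans (hk n) (by omega)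
  have hk' : ∀ n, k n - 1 ≤ 2 * n + 2 := fun n => le_trans (Nat.sub_le _ _) (hk2 n)
  have hu : Summable (fun n => |b n * (k n : ℝ)| * R ^ (k n - 1)) :=
    summable_main (2*A) hb' hk' R hR0
  refine hasDerivAt_of_tendstoUniformlyOn (l := (atTop : Filter (Finset ℕ))) (Metric.isOpen_ball)
    (f := fun (t : Finset ℕ) (y : ℝ) => ∑ n ∈ t, b n * y ^ k n)
    (f' := fun (t : Finset ℕ) (y : ℝ) => ∑ n ∈ t, b n * (k n : ℝ) * y ^ (k n - 1))
    (g' := fun (y : ℝ) => ∑' n, b n * (k n : ℝ) * y ^ (k n - 1))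
    ?_ ?_ ?_ hxR
  · apply tendstoUniformlyOn_tsum hu
    intro n y hy
    have hyR : |y| ≤ R := by
      simp only [Metric.mem_ball, Real.dist_eq, sub_zero] at hy
      linarith
    rw [Real.norm_eq_abs, abs_mul, abs_pow]
    exact mul_le_mul_of_nonneg_left (pow_le_pow_left₀ (abs_nonneg y) hyR _) (abs_nonneg _)
  · filter_upwards with t y _
    apply HasDerivAt.fun_sum
    intro n _
    simpa [mul_assoc] using (hasDerivAt_pow (k n) y).const_mul (b n)
  · intro y _
    exact (summable_pt A hb hk2 y).hasSum

noncomputable section Series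

/-- The generic even series `∑ aₙ x^{2n}`. -/
def S0 (a : ℕ → ℝ) (x : ℝ) : ℝ := ∑' n, a n * x ^ (2 * n)

/-- Its termwise derivative. -/
def D1 (a : ℕ → ℝ) (x : ℝ) : ℝ := ∑' n, a n * ((2 * n : ℕ) : ℝ) * x ^ (2 * n - 1)

/-- Its termwise second derivative. -/
def D2 (a : ℕ → ℝ) (x : ℝ) : ℝ :=
  ∑' n, a n * ((2 * n : ℕ) : ℝ) * ((2 * n - 1 : ℕ) : ℝ) * x ^ (2 * n - 1 - 1)

def IsBdd (a : ℕ → ℝ) : Prop :=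
  ∀ n : ℕ, |a n| ≤ ((n : ℝ) + 1) / (4 ^ n * (n.factorial : ℝ) ^ 2)

lemma two_pow_two_mul (n : ℕ) : (2 : ℝ) ^ (2 * n) = 4 ^ n := by
  rw [pow_mul]; norm_num

lemma harmonicPhi_nonneg (n : ℕ) : 0 ≤ harmonicPhi n := by
  apply Finset.sum_nonneg; intro m _; positivity

lemma harmonicPhi_le (n : ℕ) : harmonicPhi n ≤ n := by
  calc harmonicPhi n ≤ ∑ m ∈ Finset.range n, (1 : ℝ) := by
        apply Finset.sum_le_sum; intro m _
        rw [div_le_one (by positivity)]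
        linarith [Nat.cast_nonneg (α := ℝ) m]
    _ = n := by simp

lemma harmonicPhi_succ (n : ℕ) :
    harmonicPhi (n + 1) = harmonicPhi n + 1 / ((n : ℝ) + 1) := by
  rw [harmonicPhi, Finset.sum_range_succ, harmonicPhi]

def aJ (n : ℕ) : ℝ := (-1) ^ n / (2 ^ (2 * n) * (n.factorial : ℝ) ^ 2)
def aS (n : ℕ) : ℝ := (-1) ^ n * harmonicPhi n / (2 ^ (2 * n) * (n.factorial : ℝ) ^ 2)
def aI (n : ℕ) : ℝ := 1 / (2 ^ (2 * n) * (n.factorial : ℝ) ^ 2)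
def aT (n : ℕ) : ℝ := harmonicPhi n / (2 ^ (2 * n) * (n.factorial : ℝ) ^ 2)

lemma cast_le_add_one (n : ℕ) : (0:ℝ) ≤ (n:ℝ) := Nat.cast_nonneg n

lemma isBdd_aJ : IsBdd aJ := by
  intro n
  rw [aJ, two_pow_two_mul, abs_div, abs_pow, abs_neg, abs_one, one_pow,
    abs_of_pos (by positivity)]
  rw [div_le_div_iff_of_pos_right (by positivity)]
  linarith [cast_le_add_one n]

lemma isBdd_aI : IsBdd aI := by
  intro n
  rw [aI, two_pow_two_mul, abs_div, abs_one, abs_of_pos (by positivity)]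
  rw [div_le_div_iff_of_pos_right (by positivity)]
  linarith [cast_le_add_one n]

lemma isBdd_aS : IsBdd aS := by
  intro n
  rw [aS, two_pow_two_mul, abs_div, abs_mul, abs_pow, abs_neg, abs_one, one_pow, one_mul,
    abs_of_nonneg (harmonicPhi_nonneg n), abs_of_pos (by positivity)]
  rw [div_le_div_iff_of_pos_right (by positivity)]
  linarith [harmonicPhi_le n]

lemma isBdd_aT : IsBdd aT := by
  intro n
  rw [aT, two_pow_two_mul, abs_div,
    abs_of_nonneg (harmonicPhi_nonneg n), abs_of_pos (by positivity)]
  rw [div_le_div_iff_of_pos_right (by positivity)]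
  linarith [harmonicPhi_le n]

lemma isBdd_zero : IsBdd (fun _ => (0 : ℝ)) := by
  intro n
  simp only [abs_zero]
  positivity

lemma IsBdd.b1 {a : ℕ → ℝ} (ha : IsBdd a) (n : ℕ) :
    |a n| ≤ 1 * ((n : ℝ) + 1) ^ 4 / (4 ^ n * (n.factorial : ℝ) ^ 2) := by
  refine (ha n).trans ?_
  rw [div_le_div_iff_of_pos_right (by positivity), one_mul]
  nlinarith [cast_le_add_one n, sq_nonneg ((n:ℝ)+1), sq_nonneg (((n:ℝ)+1)^2 - 1)]

lemma cast_two_mul (n : ℕ) : |((2 * n : ℕ) : ℝ)| = 2 * (n : ℝ) := by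
  rw [abs_of_nonneg (by positivity)]; push_cast; ring

lemma cast_two_mul_sub (n : ℕ) : |((2 * n - 1 : ℕ) : ℝ)| ≤ 2 * (n : ℝ) := by
  rw [abs_of_nonneg (by positivity)]
  calc ((2 * n - 1 : ℕ) : ℝ) ≤ ((2 * n : ℕ) : ℝ) := by
        exact_mod_cast Nat.sub_le (2*n) 1
    _ = 2 * (n : ℝ) := by push_cast; ring

lemma IsBdd.b2 {a : ℕ → ℝ} (ha : IsBdd a) (n : ℕ) :
    |a n * ((2 * n : ℕ) : ℝ)| ≤ 2 * ((n : ℝ) + 1) ^ 4 / (4 ^ n * (n.factorial : ℝ) ^ 2) := by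
  rw [abs_mul, cast_two_mul]
  calc |a n| * (2 * (n:ℝ)) ≤ (((n:ℝ)+1) / (4 ^ n * (n.factorial:ℝ)^2)) * (2 * (n:ℝ)) :=
        mul_le_mul_of_nonneg_right (ha n) (by positivity)
    _ ≤ 2 * ((n:ℝ)+1)^4 / (4 ^ n * (n.factorial:ℝ)^2) := by
        rw [div_mul_eq_mul_div, div_le_div_iff_of_pos_right (by positivity)]
        nlinarith [cast_le_add_one n, sq_nonneg ((n:ℝ)+1), sq_nonneg (((n:ℝ)+1)^2 - 1)]

lemma IsBdd.b3 {a : ℕ → ℝ} (ha : IsBdd a) (n : ℕ) :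
    |a n * ((2 * n : ℕ) : ℝ) * ((2 * n - 1 : ℕ) : ℝ)|
      ≤ 4 * ((n : ℝ) + 1) ^ 4 / (4 ^ n * (n.factorial : ℝ) ^ 2) := by
  rw [abs_mul, abs_mul, cast_two_mul]
  calc |a n| * (2 * (n:ℝ)) * |((2 * n - 1 : ℕ) : ℝ)|
      ≤ (((n:ℝ)+1) / (4 ^ n * (n.factorial:ℝ)^2)) * (2 * (n:ℝ)) * (2 * (n:ℝ)) := by
        apply mul_le_mul _ (cast_two_mul_sub n) (abs_nonneg _) (by positivity)
        exact mul_le_mul_of_nonneg_right (ha n) (by positivity)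
    _ ≤ 4 * ((n:ℝ)+1)^4 / (4 ^ n * (n.factorial:ℝ)^2) := by
        rw [div_mul_eq_mul_div, div_mul_eq_mul_div,
          div_le_div_iff_of_pos_right (by positivity)]
        nlinarith [cast_le_add_one n, sq_nonneg ((n:ℝ)+1), sq_nonneg ((n:ℝ)*((n:ℝ)+1))]

lemma summ_gen {a : ℕ → ℝ} (ha : IsBdd a) (c : ℕ → ℝ)
    (hc : ∀ n, |c n| ≤ 4 * ((n : ℝ) + 1) ^ 3) (e : ℕ → ℕ) (he : ∀ n, e n ≤ 2 * n + 2)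
    (x : ℝ) : Summable (fun n => a n * c n * x ^ e n) := by
  apply summable_pt (A := 4) ?_ he x
  intro n
  rw [abs_mul]
  calc |a n| * |c n| ≤ (((n:ℝ)+1) / (4 ^ n * (n.factorial:ℝ)^2)) * (4 * ((n:ℝ)+1)^3) :=
        mul_le_mul (ha n) (hc n) (abs_nonneg _) (by positivity)
    _ = 4 * ((n:ℝ)+1)^4 / (4 ^ n * (n.factorial:ℝ)^2) := by
        rw [div_mul_eq_mul_div]; ring_nf

lemma hasDerivAt_S0 {a : ℕ → ℝ} (ha : IsBdd a) (x : ℝ) :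
    HasDerivAt (fun y => S0 a y) (D1 a x) x := by
  exact hasDerivAt_tsum_pow (b := a) (k := fun n => 2 * n) 1 ha.b1
    (fun n => by rw [show (2:ℝ)*1 = 2 from by norm_num]; exact ha.b2 n)
    (fun n => le_refl _) x

lemma hasDerivAt_D1 {a : ℕ → ℝ} (ha : IsBdd a) (x : ℝ) :
    HasDerivAt (fun y => D1 a y) (D2 a x) x := by
  have h := hasDerivAt_tsum_pow (b := fun n => a n * ((2 * n : ℕ) : ℝ))
    (k := fun n => 2 * n - 1) 2 (fun n => ha.b2 n)
    (fun n => by rw [show (2:ℝ)*2 = 4 from by norm_num]; exact ha.b3 n)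
    (fun n => Nat.sub_le (2*n) 1) x
  exact h

end Series

section ODEIdentity

lemma summ_poly {a : ℕ → ℝ} (ha : IsBdd a) (c : ℕ → ℝ)
    (hc : ∀ n, |c n| ≤ 4 * ((n : ℝ) + 1) ^ 3) (e : ℕ → ℕ) (he : ∀ n, e n ≤ 2 * n + 2)
    (x : ℝ) : Summable (fun n => a n * c n * x ^ e n) := summ_gen ha c hc e he x

lemma summ_pow {a : ℕ → ℝ} (ha : IsBdd a) (e : ℕ → ℕ) (he : ∀ n, e n ≤ 2 * n + 2)
    (x : ℝ) : Summable (fun n => a n * x ^ e n) := by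
  have h := summ_gen ha (fun _ => 1)
    (fun n => by rw [abs_one]; nlinarith [cast_le_add_one n, sq_nonneg ((n:ℝ)+1)]) e he x
  exact h.congr (fun n => by ring)

lemma ode_key {a g : ℕ → ℝ} (ha : IsBdd a) (hg : IsBdd g) (ε : ℝ)
    (hrec : ∀ n : ℕ, a (n+1) * (4*((n:ℝ)+1)^2) = ε * a n + (4*((n:ℝ)+1)) * g (n+1))
    (x : ℝ) : x * D2 a x + D1 a x = ε * (x * S0 a x) + 2 * D1 g x := by
  have hb1 : ∀ n : ℕ, |4*((n:ℝ))^2 - 2*(n:ℝ)| ≤ 4 * ((n:ℝ)+1)^3 := by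
    intro n
    refine (abs_sub _ _).trans ?_
    rw [abs_of_nonneg (by positivity), abs_of_nonneg (by positivity)]
    nlinarith [cast_le_add_one n, sq_nonneg ((n:ℝ))]
  have hb2 : ∀ n : ℕ, |2*(n:ℝ)| ≤ 4 * ((n:ℝ)+1)^3 := by
    intro n
    rw [abs_of_nonneg (by positivity)]
    nlinarith [cast_le_add_one n, sq_nonneg ((n:ℝ)+1)]
  have hb3 : ∀ n : ℕ, |4*((n:ℝ))^2| ≤ 4 * ((n:ℝ)+1)^3 := by
    intro n
    rw [abs_of_nonneg (by positivity)]
    nlinarith [cast_le_add_one n, sq_nonneg ((n:ℝ))]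
  have S1 : Summable (fun n => a n * (4*((n:ℝ))^2 - 2*(n:ℝ)) * x ^ (2*n-1)) :=
    summ_poly ha _ hb1 _ (fun n => by omega) x
  have S2 : Summable (fun n => a n * (2*(n:ℝ)) * x ^ (2*n-1)) :=
    summ_poly ha _ hb2 _ (fun n => by omega) x
  have S3 : Summable (fun n => a n * (4*((n:ℝ))^2) * x ^ (2*n-1)) :=
    summ_poly ha _ hb3 _ (fun n => by omega) x
  have Sa : Summable (fun n : ℕ => ε * (a n * x ^ (2*n+1))) :=
    (summ_pow ha _ (fun n => by omega) x).mul_left ε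
  have SgD1 : Summable (fun n => g n * ((2*n : ℕ) : ℝ) * x ^ (2*n-1)) := by
    apply summ_poly hg (fun n => ((2*n : ℕ) : ℝ)) ?_ _ (fun n => by omega) x
    intro n
    rw [cast_two_mul]
    nlinarith [cast_le_add_one n, sq_nonneg ((n:ℝ)+1)]
  have Sb : Summable (fun n : ℕ => (4*((n:ℝ)+1)) * g (n+1) * x ^ (2*n+1)) := by
    have h := ((summable_nat_add_iff 1).mpr SgD1).mul_left 2
    apply h.congr
    intro n
    have e2 : 2*(n+1) - 1 = 2*n+1 := by omega
    rw [e2]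
    push_cast
    ring
  have hxD2 : x * D2 a x = ∑' n, a n * (4*((n:ℝ))^2 - 2*(n:ℝ)) * x ^ (2*n - 1) := by
    rw [D2, ← tsum_mul_left]
    apply tsum_congr
    intro n
    cases n with
    | zero => norm_num
    | succ m =>
      have e1 : 2*(m+1) - 1 - 1 = 2*m := by omega
      have e2 : 2*(m+1) - 1 = 2*m + 1 := by omega
      rw [e1, e2]
      push_cast
      ring
  have hD1' : D1 a x = ∑' n, a n * (2*((n:ℝ))) * x ^ (2*n - 1) := by
    rw [D1]
    apply tsum_congr
    intro n
    push_cast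
    ring
  have hsum1 : x * D2 a x + D1 a x = ∑' n, a n * (4*((n:ℝ))^2) * x ^ (2*n-1) := by
    rw [hxD2, hD1', ← Summable.tsum_add S1 S2]
    apply tsum_congr
    intro n
    ring
  have hshift : ∑' n, a n * (4*((n:ℝ))^2) * x ^ (2*n-1)
      = ∑' n, (a (n+1) * (4*((n:ℝ)+1)^2)) * x ^ (2*n+1) := by
    rw [Summable.tsum_eq_zero_add S3]
    have h0 : a 0 * (4*((0:ℕ):ℝ)^2) * x ^ (2*0-1) = 0 := by norm_num
    rw [h0, zero_add]
    apply tsum_congr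
    intro n
    have e2 : 2*(n+1) - 1 = 2*n+1 := by omega
    rw [e2]
    push_cast
    ring
  have hsplit : ∑' n, (a (n+1) * (4*((n:ℝ)+1)^2)) * x ^ (2*n+1)
      = ε * (∑' n : ℕ, a n * x ^ (2*n+1)) + ∑' n : ℕ, (4*((n:ℝ)+1)) * g (n+1) * x ^ (2*n+1) := by
    rw [← tsum_mul_left, ← Summable.tsum_add Sa Sb]
    apply tsum_congr
    intro n
    rw [hrec n]
    ring
  have hrhs1 : ε * (x * S0 a x) = ε * ∑' n : ℕ, a n * x ^ (2*n+1) := by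
    rw [S0, ← tsum_mul_left]
    congr 1
    apply tsum_congr
    intro n
    ring
  have hrhs2 : 2 * D1 g x = ∑' n : ℕ, (4*((n:ℝ)+1)) * g (n+1) * x ^ (2*n+1) := by
    rw [D1, ← tsum_mul_left, Summable.tsum_eq_zero_add (SgD1.mul_left 2)]
    have h0 : 2 * (g 0 * ((2*0 : ℕ) : ℝ) * x ^ (2*0-1)) = 0 := by norm_num
    rw [h0, zero_add]
    apply tsum_congr
    intro n
    have e2 : 2*(n+1) - 1 = 2*n+1 := by omega
    rw [e2]
    push_cast
    ring
  rw [hsum1, hshift, hsplit, hrhs1, hrhs2]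

lemma S0_zero (a : ℕ → ℝ) : S0 a 0 = a 0 := by
  rw [S0, tsum_eq_single 0]
  · norm_num
  · intro n hn
    have h2n : 2*n ≠ 0 := by omega
    rw [zero_pow h2n, mul_zero]

lemma D1_zeroFun (x : ℝ) : D1 (fun _ => (0:ℝ)) x = 0 := by
  simp [D1]

end ODEIdentity

section Concrete

lemma fact_ne (n : ℕ) : ((n.factorial : ℝ)) ≠ 0 := Nat.cast_ne_zero.mpr n.factorial_ne_zero

lemma rec_J (n : ℕ) : aJ (n+1) * (4*((n:ℝ)+1)^2) = (-1) * aJ n := by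
  rw [aJ, aJ, show 2*(n+1) = 2*n+2 from by ring, pow_add, Nat.factorial_succ]
  have h1 := fact_ne n
  have h2 : ((2:ℝ))^(2*n) ≠ 0 := by positivity
  have h3 : ((n:ℝ)+1) ≠ 0 := by positivity
  push_cast
  field_simp
  ring

lemma rec_I (n : ℕ) : aI (n+1) * (4*((n:ℝ)+1)^2) = 1 * aI n := by
  rw [aI, aI, show 2*(n+1) = 2*n+2 from by ring, pow_add, Nat.factorial_succ]
  have h1 := fact_ne n
  have h2 : ((2:ℝ))^(2*n) ≠ 0 := by positivity
  have h3 : ((n:ℝ)+1) ≠ 0 := by positivity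
  push_cast
  field_simp
  ring

lemma rec_S (n : ℕ) :
    aS (n+1) * (4*((n:ℝ)+1)^2) = (-1) * aS n + (4*((n:ℝ)+1)) * aJ (n+1) := by
  rw [aS, aS, aJ, show 2*(n+1) = 2*n+2 from by ring, pow_add, Nat.factorial_succ,
    harmonicPhi_succ]
  have h1 := fact_ne n
  have h2 : ((2:ℝ))^(2*n) ≠ 0 := by positivity
  have h3 : ((n:ℝ)+1) ≠ 0 := by positivity
  push_cast
  field_simp
  ring

lemma rec_T (n : ℕ) :
    aT (n+1) * (4*((n:ℝ)+1)^2) = 1 * aT n + (4*((n:ℝ)+1)) * aI (n+1) := by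
  rw [aT, aT, aI, show 2*(n+1) = 2*n+2 from by ring, pow_add, Nat.factorial_succ,
    harmonicPhi_succ]
  have h1 := fact_ne n
  have h2 : ((2:ℝ))^(2*n) ≠ 0 := by positivity
  have h3 : ((n:ℝ)+1) ≠ 0 := by positivity
  push_cast
  field_simp
  ring

lemma odeJ (x : ℝ) : x * D2 aJ x + D1 aJ x + x * S0 aJ x = 0 := by
  have h := ode_key isBdd_aJ isBdd_zero (-1) (fun n => by rw [rec_J n]; ring) x
  rw [D1_zeroFun] at h
  linarith

lemma odeS (x : ℝ) : x * D2 aS x + D1 aS x + x * S0 aS x = 2 * D1 aJ x := by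
  have h := ode_key isBdd_aS isBdd_aJ (-1) (fun n => rec_S n) x
  linarith

lemma odeI (x : ℝ) : x * D2 aI x + D1 aI x - x * S0 aI x = 0 := by
  have h := ode_key isBdd_aI isBdd_zero 1 (fun n => by rw [rec_I n]; ring) x
  rw [D1_zeroFun] at h
  linarith

lemma odeT (x : ℝ) : x * D2 aT x + D1 aT x - x * S0 aT x = 2 * D1 aI x := by
  have h := ode_key isBdd_aT isBdd_aI 1 (fun n => rec_T n) x
  linarith

lemma aJ_zero : aJ 0 = 1 := by norm_num [aJ]
lemma aI_zero : aI 0 = 1 := by norm_num [aI]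

/-- Constancy of (a multiple of) the Wronskian. -/
lemma wron_gen {a s : ℕ → ℝ} (ha : IsBdd a) (hs : IsBdd s) (ε : ℝ)
    (hodea : ∀ x, x * D2 a x + D1 a x + ε * (x * S0 a x) = 0)
    (hodes : ∀ x, x * D2 s x + D1 s x + ε * (x * S0 s x) = 2 * D1 a x) (x : ℝ) :
    S0 a x ^ 2 - x * S0 a x * D1 s x + x * D1 a x * S0 s x = (a 0)^2 := by
  set Φ : ℝ → ℝ := fun y => S0 a y ^ 2 - y * S0 a y * D1 s y + y * D1 a y * S0 s y with hΦdef
  have hΦ : ∀ y, HasDerivAt Φ 0 y := by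
    intro y
    have h1 := hasDerivAt_S0 ha y
    have h2 := hasDerivAt_D1 ha y
    have h3 := hasDerivAt_S0 hs y
    have h4 := hasDerivAt_D1 hs y
    have hid := hasDerivAt_id y
    have hP := ((h1.pow 2).sub (((hid.mul h1).mul h4))).add ((hid.mul h2).mul h3)
    refine hP.congr_deriv ?_
    symm
    have e1 := hodea y
    have e2 := hodes y
    norm_num
    linear_combination S0 a y * e2 - S0 s y * e1
  have hconst : ∀ y : ℝ, Φ y = Φ 0 := by
    intro y
    exact is_const_of_deriv_eq_zero (fun z => (hΦ z).differentiableAt)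
      (fun z => (hΦ z).deriv) y 0
  have h0 : Φ 0 = (a 0)^2 := by
    rw [hΦdef]
    simp only [zero_mul, mul_zero, sub_zero, add_zero, zero_add]
    rw [S0_zero]
  calc S0 a x ^ 2 - x * S0 a x * D1 s x + x * D1 a x * S0 s x = Φ x := rfl
    _ = Φ 0 := hconst x
    _ = (a 0)^2 := h0

lemma wronJ (x : ℝ) :
    S0 aJ x ^ 2 - x * S0 aJ x * D1 aS x + x * D1 aJ x * S0 aS x = 1 := by
  have h := wron_gen isBdd_aJ isBdd_aS 1
    (fun y => by have := odeJ y; linarith)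
    (fun y => by have := odeS y; linarith) x
  rw [aJ_zero] at h
  simpa using h

lemma wronI (x : ℝ) :
    S0 aI x ^ 2 - x * S0 aI x * D1 aT x + x * D1 aI x * S0 aT x = 1 := by
  have h := wron_gen isBdd_aI isBdd_aT (-1)
    (fun y => by have := odeI y; linarith)
    (fun y => by have := odeT y; linarith) x
  rw [aI_zero] at h
  simpa using h

lemma besselJ0_eq (x : ℝ) : besselJ0 x = S0 aJ x := by
  rw [besselJ0, S0]
  apply tsum_congr
  intro n
  rw [aJ]
  ring

lemma besselI0_eq (x : ℝ) : besselI0 x = S0 aI x := by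
  rw [besselI0, S0]
  apply tsum_congr
  intro n
  rw [aI]
  ring

lemma besselY0_eq (x : ℝ) : besselY0 x
    = (2 / Real.pi) * ((Real.log (x / 2) + Real.eulerMascheroniConstant) * S0 aJ x - S0 aS x) := by
  rw [besselY0, besselJ0_eq]
  congr 2
  rw [S0]
  apply tsum_congr
  intro n
  rw [aS]
  ring

lemma besselK0_eq (x : ℝ) : besselK0 x
    = -(Real.log (x / 2) + Real.eulerMascheroniConstant) * S0 aI x + S0 aT x := by
  rw [besselK0, besselI0_eq]
  congr 1
  rw [S0]
  apply tsum_congr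
  intro n
  rw [aT]
  ring

end Concrete

section Uniqueness

lemma ode_unique (lam : ℝ) (h h' h'' : ℝ → ℝ)
    (hd : ∀ u ∈ Set.Ioi (0:ℝ), HasDerivAt h (h' u) u)
    (hd' : ∀ u ∈ Set.Ioi (0:ℝ), HasDerivAt h' (h'' u) u)
    (heq : ∀ u ∈ Set.Ioi (0:ℝ), h'' u + h' u / u + lam * h u = 0)
    (hone : h 1 = 0) (hone' : h' 1 = 0) : ∀ u ∈ Set.Ioi (0:ℝ), h u = 0 := by
  intro u₀ hu₀
  rw [Set.mem_Ioi] at hu₀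
  set a : ℝ := min u₀ 1 / 2 with ha
  set b : ℝ := max u₀ 1 + 1 with hb
  have hmin : 0 < min u₀ 1 := lt_min hu₀ one_pos
  have ha0 : 0 < a := by rw [ha]; linarith
  have hu₀ab : u₀ ∈ Set.Ioo a b := by
    constructor
    · rw [ha]; have := min_le_left u₀ 1; linarith
    · rw [hb]; have := le_max_left u₀ 1; linarith
  have h1ab : (1:ℝ) ∈ Set.Ioo a b := by
    constructor
    · rw [ha]; have := min_le_right u₀ 1; linarith
    · rw [hb]; have := le_max_right u₀ 1; linarith
  set K : NNReal := ⟨1/a + |lam| + 1, by positivity⟩ with hK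
  set v : ℝ → ℝ × ℝ → ℝ × ℝ := fun t p => (p.2, -(p.2) / (max t a) - lam * p.1) with hv
  have hlip : ∀ t : ℝ, LipschitzOnWith K (v t) Set.univ := by
    intro t
    rw [lipschitzOnWith_iff_dist_le_mul]
    intro p _ q _
    have hm : a ≤ max t a := le_max_right t a
    have hm0 : 0 < max t a := lt_of_lt_of_le ha0 hm
    have hd1 : dist p.1 q.1 ≤ dist p q := by rw [Prod.dist_eq]; exact le_max_left _ _
    have hd2 : dist p.2 q.2 ≤ dist p q := by rw [Prod.dist_eq]; exact le_max_right _ _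
    rw [Prod.dist_eq]
    rw [sup_le_iff]
    have hKval : (K : ℝ) = 1/a + |lam| + 1 := rfl
    have hdist0 : (0:ℝ) ≤ dist p q := dist_nonneg
    constructor
    · calc dist (v t p).1 (v t q).1 = dist p.2 q.2 := rfl
        _ ≤ dist p q := hd2
        _ ≤ (K : ℝ) * dist p q := by
            nlinarith [abs_nonneg lam, one_div_pos.mpr ha0]
    · have : dist (v t p).2 (v t q).2
          = |(-(p.2) / (max t a) - lam * p.1) - (-(q.2) / (max t a) - lam * q.1)| := by
        rw [hv, Real.dist_eq]
      rw [this]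
      have e1 : (-(p.2) / (max t a) - lam * p.1) - (-(q.2) / (max t a) - lam * q.1)
          = (q.2 - p.2) / (max t a) + lam * (q.1 - p.1) := by ring
      rw [e1]
      have hb1 : |(q.2 - p.2) / (max t a)| ≤ dist p q / a := by
        rw [abs_div, abs_of_pos hm0]
        apply div_le_div₀ ?_ ?_ ha0 hm
        · exact hdist0
        · rw [abs_sub_comm, ← Real.dist_eq]; exact hd2
      have hb2 : |lam * (q.1 - p.1)| ≤ |lam| * dist p q := by
        rw [abs_mul]
        apply mul_le_mul_of_nonneg_left _ (abs_nonneg lam)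
        rw [abs_sub_comm, ← Real.dist_eq]; exact hd1
      calc |(q.2 - p.2) / (max t a) + lam * (q.1 - p.1)|
          ≤ |(q.2 - p.2) / (max t a)| + |lam * (q.1 - p.1)| := abs_add_le _ _
        _ ≤ dist p q / a + |lam| * dist p q := add_le_add hb1 hb2
        _ ≤ (K : ℝ) * dist p q := by
            rw [hKval, div_eq_mul_one_div, mul_comm (dist p q) (1/a)]
            nlinarith
  set F : ℝ → ℝ × ℝ := fun t => (h t, h' t) with hF
  have hFd : ∀ t ∈ Set.Ioo a b, HasDerivAt F (v t (F t)) t ∧ F t ∈ Set.univ := by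
    intro t ht
    refine ⟨?_, trivial⟩
    have hta : 0 < t := lt_trans ha0 ht.1
    have hmax : max t a = t := max_eq_left (le_of_lt ht.1)
    have hv1 : v t (F t) = (h' t, h'' t) := by
      rw [hv, hF]
      simp only [hmax]
      have he := heq t (Set.mem_Ioi.mpr hta)
      have : -(h' t) / t - lam * h t = h'' t := by
        rw [neg_div]
        linarith
      rw [this]
    rw [hv1]
    exact (hd t (Set.mem_Ioi.mpr hta)).prodMk (hd' t (Set.mem_Ioi.mpr hta))
  have hGd : ∀ t ∈ Set.Ioo a b,
      HasDerivAt (fun _ : ℝ => ((0:ℝ),(0:ℝ))) (v t ((0:ℝ),(0:ℝ))) t ∧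
        ((0:ℝ),(0:ℝ)) ∈ Set.univ := by
    intro t ht
    refine ⟨?_, trivial⟩
    have : v t ((0:ℝ),(0:ℝ)) = ((0:ℝ),(0:ℝ)) := by
      rw [hv]; simp
    rw [this]
    exact hasDerivAt_const t _
  have heq1 : F 1 = ((0:ℝ),(0:ℝ)) := by
    rw [hF]; simp only []; rw [hone, hone']
  have key := ODE_solution_unique_of_mem_Ioo (fun t _ => hlip t) h1ab hFd hGd heq1 hu₀ab
  have : F u₀ = ((0:ℝ),(0:ℝ)) := key
  exact congrArg Prod.fst this

end Uniqueness

section Span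

lemma span_two (lam : ℝ) (f y₁ y₁' y₁'' y₂ y₂' y₂'' : ℝ → ℝ)
    (hf : ∀ u ∈ Set.Ioi (0:ℝ), DifferentiableAt ℝ f u)
    (hf' : ∀ u ∈ Set.Ioi (0:ℝ), DifferentiableAt ℝ (deriv f) u)
    (hfeq : ∀ u ∈ Set.Ioi (0:ℝ), deriv (deriv f) u + deriv f u / u + lam * f u = 0)
    (hy1 : ∀ u ∈ Set.Ioi (0:ℝ), HasDerivAt y₁ (y₁' u) u)
    (hy1' : ∀ u ∈ Set.Ioi (0:ℝ), HasDerivAt y₁' (y₁'' u) u)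
    (hy1eq : ∀ u ∈ Set.Ioi (0:ℝ), y₁'' u + y₁' u / u + lam * y₁ u = 0)
    (hy2 : ∀ u ∈ Set.Ioi (0:ℝ), HasDerivAt y₂ (y₂' u) u)
    (hy2' : ∀ u ∈ Set.Ioi (0:ℝ), HasDerivAt y₂' (y₂'' u) u)
    (hy2eq : ∀ u ∈ Set.Ioi (0:ℝ), y₂'' u + y₂' u / u + lam * y₂ u = 0)
    (hW : y₁ 1 * y₂' 1 - y₁' 1 * y₂ 1 ≠ 0) :
    ∃ c₁ c₂ : ℝ, ∀ u ∈ Set.Ioi (0:ℝ), f u = c₁ * y₁ u + c₂ * y₂ u := by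
  set D := y₁ 1 * y₂' 1 - y₁' 1 * y₂ 1 with hD
  set c₁ := (f 1 * y₂' 1 - deriv f 1 * y₂ 1) / D with hc₁
  set c₂ := (y₁ 1 * deriv f 1 - y₁' 1 * f 1) / D with hc₂
  refine ⟨c₁, c₂, ?_⟩
  set h : ℝ → ℝ := fun u => f u - c₁ * y₁ u - c₂ * y₂ u with hh
  set h' : ℝ → ℝ := fun u => deriv f u - c₁ * y₁' u - c₂ * y₂' u with hh'
  set h'' : ℝ → ℝ := fun u => deriv (deriv f) u - c₁ * y₁'' u - c₂ * y₂'' u with hh''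
  have hd : ∀ u ∈ Set.Ioi (0:ℝ), HasDerivAt h (h' u) u := by
    intro u hu
    exact ((hf u hu).hasDerivAt.sub ((hy1 u hu).const_mul c₁)).sub ((hy2 u hu).const_mul c₂)
  have hd' : ∀ u ∈ Set.Ioi (0:ℝ), HasDerivAt h' (h'' u) u := by
    intro u hu
    exact ((hf' u hu).hasDerivAt.sub ((hy1' u hu).const_mul c₁)).sub
      ((hy2' u hu).const_mul c₂)
  have heq : ∀ u ∈ Set.Ioi (0:ℝ), h'' u + h' u / u + lam * h u = 0 := by
    intro u hu
    have e1 := hfeq u hu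
    have e2 := hy1eq u hu
    have e3 := hy2eq u hu
    have hu0 : u ≠ 0 := ne_of_gt (Set.mem_Ioi.mp hu)
    rw [hh, hh', hh'']
    simp only []
    field_simp
    field_simp at e1 e2 e3
    linear_combination e1 - c₁ * e2 - c₂ * e3
  have hone : h 1 = 0 := by
    rw [hh]
    simp only []
    rw [hc₁, hc₂]
    field_simp
    ring
  have hone' : h' 1 = 0 := by
    rw [hh']
    simp only []
    rw [hc₁, hc₂]
    field_simp
    ring
  intro u hu
  have := ode_unique lam h h' h'' hd hd' heq hone hone' u hu
  rw [hh] at this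
  simp only [] at this
  linarith

end Span

section Candidates

lemma hasDerivAt_scale {g g' : ℝ → ℝ} (k u : ℝ) (hg : HasDerivAt g (g' (k*u)) (k*u)) :
    HasDerivAt (fun t => g (k*t)) (k * g' (k*u)) u := by
  have h := hg.comp u ((hasDerivAt_id u).const_mul k)
  simpa [Function.comp_def, mul_comm] using h

lemma cand_d1 {a : ℕ → ℝ} (ha : IsBdd a) (k u : ℝ) :
    HasDerivAt (fun t => S0 a (k*t)) (k * D1 a (k*u)) u :=
  hasDerivAt_scale k u (hasDerivAt_S0 ha (k*u))

lemma cand_d2 {a : ℕ → ℝ} (ha : IsBdd a) (k u : ℝ) :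
    HasDerivAt (fun t => k * D1 a (k*t)) (k^2 * D2 a (k*u)) u := by
  have h := (hasDerivAt_scale k u (hasDerivAt_D1 ha (k*u))).const_mul k
  exact h.congr_deriv (by ring)

lemma cand_ode {a : ℕ → ℝ} (ε : ℝ)
    (hodea : ∀ x, x * D2 a x + D1 a x + ε * (x * S0 a x) = 0)
    (k : ℝ) (u : ℝ) (hu : u ≠ 0) :
    k^2 * D2 a (k*u) + (k * D1 a (k*u)) / u + (ε * k^2) * S0 a (k*u) = 0 := by
  have h := hodea (k*u)
  field_simp
  linear_combination k * h

lemma hasDerivAt_logpart (k : ℝ) (hk : 0 < k) (u : ℝ) (hu : 0 < u) :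
    HasDerivAt (fun t => Real.log (k*t/2) + Real.eulerMascheroniConstant) (1/u) u := by
  have hne : k*u/2 ≠ 0 := by positivity
  have hinner : HasDerivAt (fun t : ℝ => k*t/2) (k/2) u := by
    simpa using ((hasDerivAt_id u).const_mul k).div_const 2
  have h := ((Real.hasDerivAt_log hne).comp u hinner).add_const Real.eulerMascheroniConstant
  exact h.congr_deriv (by field_simp)

/-- derivative of the log-type candidate -/
lemma logcand_d1 {a s : ℕ → ℝ} (ha : IsBdd a) (hs : IsBdd s) (k : ℝ) (hk : 0 < k)
    (u : ℝ) (hu : 0 < u) :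
    HasDerivAt (fun t => (Real.log (k*t/2) + Real.eulerMascheroniConstant) * S0 a (k*t)
        - S0 s (k*t))
      ((1/u) * S0 a (k*u)
        + (Real.log (k*u/2) + Real.eulerMascheroniConstant) * (k * D1 a (k*u))
        - k * D1 s (k*u)) u := by
  exact ((hasDerivAt_logpart k hk u hu).mul (cand_d1 ha k u)).sub (cand_d1 hs k u)

lemma logcand_d2 {a s : ℕ → ℝ} (ha : IsBdd a) (hs : IsBdd s) (k : ℝ) (hk : 0 < k)
    (u : ℝ) (hu : 0 < u) :
    HasDerivAt (fun t => (1/t) * S0 a (k*t)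
        + (Real.log (k*t/2) + Real.eulerMascheroniConstant) * (k * D1 a (k*t))
        - k * D1 s (k*t))
      (-(1/u^2) * S0 a (k*u) + (1/u) * (k * D1 a (k*u))
        + ((1/u) * (k * D1 a (k*u))
          + (Real.log (k*u/2) + Real.eulerMascheroniConstant) * (k^2 * D2 a (k*u)))
        - k^2 * D2 s (k*u)) u := by
  have hinv : HasDerivAt (fun t : ℝ => 1/t) (-(1/u^2)) u := by
    have := hasDerivAt_inv (ne_of_gt hu)
    simpa [one_div] using this
  exact ((hinv.mul (cand_d1 ha k u)).add
    ((hasDerivAt_logpart k hk u hu).mul (cand_d2 ha k u))).sub (cand_d2 hs k u)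

lemma logcand_ode {a s : ℕ → ℝ} (ε : ℝ)
    (hodea : ∀ x, x * D2 a x + D1 a x + ε * (x * S0 a x) = 0)
    (hodes : ∀ x, x * D2 s x + D1 s x + ε * (x * S0 s x) = 2 * D1 a x)
    (k : ℝ) (u : ℝ) (hu : u ≠ 0) :
    (-(1/u^2) * S0 a (k*u) + (1/u) * (k * D1 a (k*u))
        + ((1/u) * (k * D1 a (k*u))
          + (Real.log (k*u/2) + Real.eulerMascheroniConstant) * (k^2 * D2 a (k*u)))
        - k^2 * D2 s (k*u))
      + ((1/u) * S0 a (k*u)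
        + (Real.log (k*u/2) + Real.eulerMascheroniConstant) * (k * D1 a (k*u))
        - k * D1 s (k*u)) / u
      + (ε * k^2) * ((Real.log (k*u/2) + Real.eulerMascheroniConstant) * S0 a (k*u)
        - S0 s (k*u)) = 0 := by
  have e1 := hodea (k*u)
  have e2 := hodes (k*u)
  field_simp
  rw [mul_comm u k]
  linear_combination ((Real.log (k*u/2) + Real.eulerMascheroniConstant) * (k * u)) * e1
    - (k*u) * e2

end Candidates

section Exists

lemma odeJ' (x : ℝ) : x * D2 aJ x + D1 aJ x + 1 * (x * S0 aJ x) = 0 := by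
  have := odeJ x; linarith

lemma odeS' (x : ℝ) : x * D2 aS x + D1 aS x + 1 * (x * S0 aS x) = 2 * D1 aJ x := by
  have := odeS x; linarith

lemma odeI' (x : ℝ) : x * D2 aI x + D1 aI x + (-1) * (x * S0 aI x) = 0 := by
  have := odeI x; linarith

lemma odeT' (x : ℝ) : x * D2 aT x + D1 aT x + (-1) * (x * S0 aT x) = 2 * D1 aI x := by
  have := odeT x; linarith

lemma exists_pos (lam : ℝ) (hlam : 0 < lam) (f : ℝ → ℝ)
    (hf : ∀ u ∈ Set.Ioi (0:ℝ), DifferentiableAt ℝ f u)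
    (hf' : ∀ u ∈ Set.Ioi (0:ℝ), DifferentiableAt ℝ (deriv f) u)
    (hfeq : ∀ u ∈ Set.Ioi (0:ℝ), deriv (deriv f) u + deriv f u / u + lam * f u = 0) :
    ∃ c₁ c₂ : ℝ, ∀ u ∈ Set.Ioi (0:ℝ),
      f u = c₁ * besselJ0 (Real.sqrt lam * u) + c₂ * besselY0 (Real.sqrt lam * u) := by
  set k := Real.sqrt lam with hkdef
  have hk : 0 < k := Real.sqrt_pos.mpr hlam
  have hk2 : k^2 = lam := Real.sq_sqrt hlam.le
  set L : ℝ → ℝ := fun u => Real.log (k*u/2) + Real.eulerMascheroniConstant with hL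
  set y₁ : ℝ → ℝ := fun u => S0 aJ (k*u) with hy₁
  set y₁' : ℝ → ℝ := fun u => k * D1 aJ (k*u) with hy₁'
  set y₁'' : ℝ → ℝ := fun u => k^2 * D2 aJ (k*u) with hy₁''
  set w : ℝ → ℝ := fun u => L u * S0 aJ (k*u) - S0 aS (k*u) with hw
  set w' : ℝ → ℝ := fun u => (1/u) * S0 aJ (k*u) + L u * (k * D1 aJ (k*u)) - k * D1 aS (k*u)
    with hw'
  set w'' : ℝ → ℝ := fun u => -(1/u^2) * S0 aJ (k*u) + (1/u) * (k * D1 aJ (k*u))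
    + ((1/u) * (k * D1 aJ (k*u)) + L u * (k^2 * D2 aJ (k*u))) - k^2 * D2 aS (k*u) with hw''
  set y₂ : ℝ → ℝ := fun u => (2/Real.pi) * w u with hy₂
  set y₂' : ℝ → ℝ := fun u => (2/Real.pi) * w' u with hy₂'
  set y₂'' : ℝ → ℝ := fun u => (2/Real.pi) * w'' u with hy₂''
  have hspan := span_two lam f y₁ y₁' y₁'' y₂ y₂' y₂'' hf hf' hfeq
    (fun u _ => cand_d1 isBdd_aJ k u)
    (fun u _ => cand_d2 isBdd_aJ k u)
    (fun u hu => by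
      have h := cand_ode (a := aJ) 1 odeJ' k u (ne_of_gt (Set.mem_Ioi.mp hu))
      simp only [hy₁'', hy₁', hy₁]
      linear_combination h - S0 aJ (k*u) * hk2)
    (fun u hu => (logcand_d1 isBdd_aJ isBdd_aS k hk u (Set.mem_Ioi.mp hu)).const_mul (2/Real.pi))
    (fun u hu => (logcand_d2 isBdd_aJ isBdd_aS k hk u (Set.mem_Ioi.mp hu)).const_mul (2/Real.pi))
    (fun u hu => by
      have h := logcand_ode (a := aJ) (s := aS) 1 odeJ' odeS' k u
        (ne_of_gt (Set.mem_Ioi.mp hu))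
      simp only [hy₂, hy₂', hy₂'', hw, hw', hw'']
      linear_combination (2/Real.pi) * h
        - (2/Real.pi) * ((L u) * S0 aJ (k*u) - S0 aS (k*u)) * hk2)
    ?_
  · obtain ⟨c₁, c₂, hc⟩ := hspan
    refine ⟨c₁, c₂, fun u hu => ?_⟩
    have e1 : besselJ0 (k * u) = y₁ u := besselJ0_eq (k*u)
    have e2 : besselY0 (k * u) = y₂ u := by
      rw [besselY0_eq]
    rw [e1, e2]
    exact hc u hu
  · have hWv : y₁ 1 * y₂' 1 - y₁' 1 * y₂ 1 = 2/Real.pi := by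
      have hwr := wronJ k
      simp only [hy₁, hy₂', hy₁', hy₂, hw', hw, mul_one]
      linear_combination (2/Real.pi) * hwr
    rw [hWv]
    exact div_ne_zero two_ne_zero Real.pi_ne_zero

lemma exists_neg (lam : ℝ) (hlam : lam < 0) (f : ℝ → ℝ)
    (hf : ∀ u ∈ Set.Ioi (0:ℝ), DifferentiableAt ℝ f u)
    (hf' : ∀ u ∈ Set.Ioi (0:ℝ), DifferentiableAt ℝ (deriv f) u)
    (hfeq : ∀ u ∈ Set.Ioi (0:ℝ), deriv (deriv f) u + deriv f u / u + lam * f u = 0) :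
    ∃ c₁ c₂ : ℝ, ∀ u ∈ Set.Ioi (0:ℝ),
      f u = c₁ * besselI0 (Real.sqrt (-lam) * u) + c₂ * besselK0 (Real.sqrt (-lam) * u) := by
  set k := Real.sqrt (-lam) with hkdef
  have hk : 0 < k := Real.sqrt_pos.mpr (by linarith)
  have hk2 : k^2 = -lam := Real.sq_sqrt (by linarith)
  set L : ℝ → ℝ := fun u => Real.log (k*u/2) + Real.eulerMascheroniConstant with hL
  set y₁ : ℝ → ℝ := fun u => S0 aI (k*u) with hy₁
  set y₁' : ℝ → ℝ := fun u => k * D1 aI (k*u) with hy₁'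
  set y₁'' : ℝ → ℝ := fun u => k^2 * D2 aI (k*u) with hy₁''
  set w : ℝ → ℝ := fun u => L u * S0 aI (k*u) - S0 aT (k*u) with hw
  set w' : ℝ → ℝ := fun u => (1/u) * S0 aI (k*u) + L u * (k * D1 aI (k*u)) - k * D1 aT (k*u)
    with hw'
  set w'' : ℝ → ℝ := fun u => -(1/u^2) * S0 aI (k*u) + (1/u) * (k * D1 aI (k*u))
    + ((1/u) * (k * D1 aI (k*u)) + L u * (k^2 * D2 aI (k*u))) - k^2 * D2 aT (k*u) with hw''
  set y₂ : ℝ → ℝ := fun u => -(w u) with hy₂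
  set y₂' : ℝ → ℝ := fun u => -(w' u) with hy₂'
  set y₂'' : ℝ → ℝ := fun u => -(w'' u) with hy₂''
  have hspan := span_two lam f y₁ y₁' y₁'' y₂ y₂' y₂'' hf hf' hfeq
    (fun u _ => cand_d1 isBdd_aI k u)
    (fun u _ => cand_d2 isBdd_aI k u)
    (fun u hu => by
      have h := cand_ode (a := aI) (-1) odeI' k u (ne_of_gt (Set.mem_Ioi.mp hu))
      simp only [hy₁'', hy₁', hy₁]
      linear_combination h + S0 aI (k*u) * hk2)
    (fun u hu => (logcand_d1 isBdd_aI isBdd_aT k hk u (Set.mem_Ioi.mp hu)).neg)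
    (fun u hu => (logcand_d2 isBdd_aI isBdd_aT k hk u (Set.mem_Ioi.mp hu)).neg)
    (fun u hu => by
      have h := logcand_ode (a := aI) (s := aT) (-1) odeI' odeT' k u
        (ne_of_gt (Set.mem_Ioi.mp hu))
      simp only [hy₂, hy₂', hy₂'', hw, hw', hw'']
      linear_combination (-1 : ℝ) * h
        - ((L u) * S0 aI (k*u) - S0 aT (k*u)) * hk2)
    ?_
  · obtain ⟨c₁, c₂, hc⟩ := hspan
    refine ⟨c₁, c₂, fun u hu => ?_⟩
    have e1 : besselI0 (k * u) = y₁ u := besselI0_eq (k*u)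
    have e2 : besselK0 (k * u) = y₂ u := by
      rw [besselK0_eq]
      rw [hy₂, hw, hL]
      ring
    rw [e1, e2]
    exact hc u hu
  · have hWv : y₁ 1 * y₂' 1 - y₁' 1 * y₂ 1 = -1 := by
      have hwr := wronI k
      simp only [hy₁, hy₂', hy₁', hy₂, hw', hw, mul_one]
      linear_combination (-1 : ℝ) * hwr
    rw [hWv]
    norm_num

end Exists

section Lap

lemma sqrtW {t : ℝ} (ht : 0 < t) : Real.sqrt |(-1 : ℝ) * t ^ 2 - 0 ^ 2| = t := by
  have h : |(-1 : ℝ) * t ^ 2 - 0 ^ 2| = t ^ 2 := by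
    rw [show (-1:ℝ) * t ^ 2 - 0 ^ 2 = -(t^2) from by ring, abs_neg, abs_of_nonneg (sq_nonneg t)]
  rw [h, Real.sqrt_sq ht.le]

lemma lapI_f (f : ℝ → ℝ) (hf' : ∀ u ∈ Set.Ioi (0:ℝ), DifferentiableAt ℝ (deriv f) u)
    (u : ℝ) (hu : 0 < u) (v : ℝ) :
    lapI (fun u _ => f u) u v = -(1/u) * (deriv f u + u * deriv (deriv f) u) := by
  have hu0 : u ≠ 0 := ne_of_gt hu
  simp only [lapI]
  rw [sqrtW hu]
  have hev : (fun t => (t ^ 2 * deriv (fun s => f s) t - 0 * deriv (fun _ => f t) v)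
      / Real.sqrt |(-1:ℝ) * t ^ 2 - 0 ^ 2|) =ᶠ[nhds u] (fun t => t * deriv f t) := by
    filter_upwards [isOpen_Ioi.mem_nhds (Set.mem_Ioi.mpr hu)] with t ht
    have ht0 : (0:ℝ) < t := Set.mem_Ioi.mp ht
    rw [sqrtW ht0, zero_mul, sub_zero]
    field_simp
  rw [hev.deriv_eq]
  have hD1 : deriv (fun t => t * deriv f t) u = deriv f u + u * deriv (deriv f) u := by
    have h := (hasDerivAt_id u).mul (hf' u (Set.mem_Ioi.mpr hu)).hasDerivAt
    simpa [Pi.mul_def] using h.deriv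
  rw [hD1]
  have hc : (fun w => (0 * deriv (fun s => f s) u - (-1:ℝ) * deriv (fun _ => f u) w) / u)
      = fun _ : ℝ => (0:ℝ) := by
    funext w
    rw [zero_mul, deriv_const]
    ring
  rw [hc, deriv_const']
  ring

lemma lapI_sinh (u : ℝ) (hu : 0 < u) (v : ℝ) :
    lapI (fun u v => u * Real.sinh v) u v = 0 := by
  have hu0 : u ≠ 0 := ne_of_gt hu
  simp only [lapI]
  rw [sqrtW hu]
  have hev : (fun t => (t ^ 2 * deriv (fun s => s * Real.sinh v) t
      - 0 * deriv (fun s => t * Real.sinh s) v)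
      / Real.sqrt |(-1:ℝ) * t ^ 2 - 0 ^ 2|) =ᶠ[nhds u] (fun t => t * Real.sinh v) := by
    filter_upwards [isOpen_Ioi.mem_nhds (Set.mem_Ioi.mpr hu)] with t ht
    have ht0 : (0:ℝ) < t := Set.mem_Ioi.mp ht
    rw [sqrtW ht0, zero_mul, sub_zero, (hasDerivAt_mul_const (Real.sinh v)).deriv]
    field_simp
  rw [hev.deriv_eq, (hasDerivAt_mul_const (Real.sinh v)).deriv]
  have hc : (fun w => (0 * deriv (fun s => s * Real.sinh w) u
      - (-1:ℝ) * deriv (fun s => u * Real.sinh s) w) / u) = fun w : ℝ => Real.cosh w := by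
    funext w
    rw [zero_mul, ((Real.hasDerivAt_sinh w).const_mul u).deriv]
    field_simp
    ring
  rw [hc]
  have : deriv (fun w : ℝ => Real.cosh w) v = Real.sinh v := (Real.hasDerivAt_cosh v).deriv
  rw [this]
  ring

lemma lapI_cosh (u : ℝ) (hu : 0 < u) (v : ℝ) :
    lapI (fun u v => u * Real.cosh v) u v = 0 := by
  have hu0 : u ≠ 0 := ne_of_gt hu
  simp only [lapI]
  rw [sqrtW hu]
  have hev : (fun t => (t ^ 2 * deriv (fun s => s * Real.cosh v) t
      - 0 * deriv (fun s => t * Real.cosh s) v)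
      / Real.sqrt |(-1:ℝ) * t ^ 2 - 0 ^ 2|) =ᶠ[nhds u] (fun t => t * Real.cosh v) := by
    filter_upwards [isOpen_Ioi.mem_nhds (Set.mem_Ioi.mpr hu)] with t ht
    have ht0 : (0:ℝ) < t := Set.mem_Ioi.mp ht
    rw [sqrtW ht0, zero_mul, sub_zero, (hasDerivAt_mul_const (Real.cosh v)).deriv]
    field_simp
  rw [hev.deriv_eq, (hasDerivAt_mul_const (Real.cosh v)).deriv]
  have hc : (fun w => (0 * deriv (fun s => s * Real.cosh w) u
      - (-1:ℝ) * deriv (fun s => u * Real.cosh s) w) / u) = fun w : ℝ => Real.sinh w := by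
    funext w
    rw [zero_mul, ((Real.hasDerivAt_cosh w).const_mul u).deriv]
    field_simp
    ring
  rw [hc]
  have : deriv (fun w : ℝ => Real.sinh w) v = Real.cosh v := (Real.hasDerivAt_sinh v).deriv
  rw [this]
  ring

end Lap

end Aux

/-- Let `f` be twice differentiable on `(0,∞)` with `u ↦ f''(u) + f'(u)/u` not identically
zero (the surface of revolution `r(u,v) = (u sinh v, u cosh v, f(u))` is not
semi-isotropic minimal). If `Δrᵢ = λᵢ rᵢ` for `i = 1,2,3` at all points with `u > 0`,
then `λ₁ = λ₂ = 0`, `λ₃ ≠ 0`, `f'' + f'/u + λ₃ f = 0` on `(0,∞)`, and `f` is a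
combination of `J₀, Y₀` (if `λ₃ > 0`) resp. `I₀, K₀` (if `λ₃ < 0`). -/
theorem surface_of_revolution_finite_type
    (f : ℝ → ℝ)
    (hf : ∀ u ∈ Set.Ioi (0 : ℝ), DifferentiableAt ℝ f u)
    (hf' : ∀ u ∈ Set.Ioi (0 : ℝ), DifferentiableAt ℝ (deriv f) u)
    (hmin : ∃ u ∈ Set.Ioi (0 : ℝ), deriv (deriv f) u + deriv f u / u ≠ 0)
    (lam₁ lam₂ lam₃ : ℝ)
    (h1 : ∀ u ∈ Set.Ioi (0 : ℝ), ∀ v : ℝ,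
      lapI (fun u v => u * Real.sinh v) u v = lam₁ * (u * Real.sinh v))
    (h2 : ∀ u ∈ Set.Ioi (0 : ℝ), ∀ v : ℝ,
      lapI (fun u v => u * Real.cosh v) u v = lam₂ * (u * Real.cosh v))
    (h3 : ∀ u ∈ Set.Ioi (0 : ℝ), ∀ v : ℝ,
      lapI (fun u _ => f u) u v = lam₃ * f u) :
    lam₁ = 0 ∧ lam₂ = 0 ∧ lam₃ ≠ 0 ∧
    (∀ u ∈ Set.Ioi (0 : ℝ), deriv (deriv f) u + deriv f u / u + lam₃ * f u = 0) ∧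
    (0 < lam₃ → ∃ c₁ c₂ : ℝ, ∀ u ∈ Set.Ioi (0 : ℝ),
      f u = c₁ * besselJ0 (Real.sqrt lam₃ * u) + c₂ * besselY0 (Real.sqrt lam₃ * u)) ∧
    (lam₃ < 0 → ∃ c₁ c₂ : ℝ, ∀ u ∈ Set.Ioi (0 : ℝ),
      f u = c₁ * besselI0 (Real.sqrt (-lam₃) * u) + c₂ * besselK0 (Real.sqrt (-lam₃) * u)) := by
  have hs1 : lam₁ = 0 := by
    have h := h1 1 (Set.mem_Ioi.mpr one_pos) 1
    rw [lapI_sinh 1 one_pos 1, one_mul] at h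
    rcases mul_eq_zero.mp h.symm with h' | h'
    · exact h'
    · exact absurd h' (ne_of_gt (Real.sinh_pos_iff.mpr one_pos))
  have hs2 : lam₂ = 0 := by
    have h := h2 1 (Set.mem_Ioi.mpr one_pos) 0
    rw [lapI_cosh 1 one_pos 0, one_mul, Real.cosh_zero] at h
    simpa using h.symm
  have hode : ∀ u ∈ Set.Ioi (0:ℝ), deriv (deriv f) u + deriv f u / u + lam₃ * f u = 0 := by
    intro u hu
    have hu0 : (0:ℝ) < u := Set.mem_Ioi.mp hu
    have hu' : u ≠ 0 := ne_of_gt hu0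
    have h := h3 u hu 0
    rw [lapI_f f hf' u hu0 0] at h
    field_simp at h ⊢
    linear_combination -h
  have hlam₃ : lam₃ ≠ 0 := by
    obtain ⟨u₀, hu₀, hne⟩ := hmin
    intro h0
    apply hne
    have h := hode u₀ hu₀
    rw [h0] at h
    linarith
  exact ⟨hs1, hs2, hlam₃, hode,
    fun hpos => exists_pos lam₃ hpos f hf hf' hode,
    fun hneg => exists_neg lam₃ hneg f hf hf' hode⟩
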